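/- Let X be a real Banach space with dual X*, let N ≥ 1 and m ≥ 0 be integers, and set M := min(N, m+1). Let f_1, …, f_N ∈ X be nonzero elements, let σ_1, …, σ_m ∈ X*, let a_1, …, a_N > 0 be positive reals, and set φ := Σ_{i=1}^N a_i f_i. Then there exist nonnegative coefficients b_1, …, b_M ≥ 0 and indices e(1), …, e(M) ∈ {1, …, N} such that Σ_{j=1}^M b_j = Σ_{i=1}^N a_i and the element u := Σ_{j=1}^M b_j f_{e(j)} satisfies σ_l(φ − u) = 0 for every l ∈ {1, …, m}. -/

import Mathlib

/-- Padding a sum over `Fin k` by zeros up to `Fin M`. -/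
lemma pad_sum_aux {M k : ℕ} (hk : k ≤ M) (F : Fin k → ℝ) :
    (∑ j : Fin M, if h : (j : ℕ) < k then F ⟨j, h⟩ else 0) = ∑ j, F j := by
  calc (∑ j : Fin M, if h : (j : ℕ) < k then F ⟨j, h⟩ else 0)
      = ∑ j ∈ Finset.range M, (if h : j < k then F ⟨j, h⟩ else 0) :=
        Fin.sum_univ_eq_sum_range (fun j => if h : j < k then F ⟨j, h⟩ else 0) M
    _ = ∑ j ∈ Finset.range k, (if h : j < k then F ⟨j, h⟩ else 0) :=
        (Finset.sum_subset (Finset.range_subset_range.2 hk)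
          (fun x _ hx => dif_neg (by simpa using hx))).symm
    _ = ∑ j : Fin k, (if h : ((j : Fin k) : ℕ) < k then F ⟨j, h⟩ else 0) :=
        Finset.sum_range _
    _ = ∑ j, F j := Finset.sum_congr rfl (fun j _ => by rw [dif_pos j.isLt])

/-- Recombination Thinning (Lemma: existence form). -/
theorem recombination_thinning
    {X : Type*} [NormedAddCommGroup X] [NormedSpace ℝ X] [CompleteSpace X]
    (N m : ℕ) (hN : 1 ≤ N)
    (f : Fin N → X) (hf : ∀ i, f i ≠ 0)
    (σ : Fin m → StrongDual ℝ X)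
    (a : Fin N → ℝ) (ha : ∀ i, 0 < a i)
    (φ : X) (hφ : φ = ∑ i, a i • f i) :
    ∃ (b : Fin (min N (m + 1)) → ℝ) (e : Fin (min N (m + 1)) → Fin N),
      (∀ j, 0 ≤ b j) ∧
      (∑ j, b j) = (∑ i, a i) ∧
      (∀ l : Fin m, σ l (φ - ∑ j, b j • f (e j)) = 0) := by
  classical
  set s : ℝ := ∑ i, a i with hs_def
  have hs : 0 < s :=
    Finset.sum_pos (fun i _ => ha i) ⟨⟨0, hN⟩, Finset.mem_univ _⟩
  -- The moment map
  set w : Fin N → (Fin m → ℝ) := fun i l => σ l (f i) with hw_def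
  -- The normalized moment vector lies in the convex hull of the moments
  have hmem : Finset.univ.centerMass a w ∈ convexHull ℝ (Set.range w) :=
    Finset.centerMass_mem_convexHull _ (fun i _ => (ha i).le) hs
      (fun i _ => Set.mem_range_self i)
  obtain ⟨ι, hFin, z, c, hzr, hai, hcpos, hcsum, hczp⟩ :=
    eq_pos_convex_span_of_mem_convexHull hmem
  -- Choose preimages
  have hg : ∀ j : ι, ∃ i : Fin N, w i = z j := fun j => hzr (Set.mem_range_self j)
  choose g hgz using hg
  have hginj : Function.Injective g := by
    intro j1 j2 h
    apply hai.injective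
    rw [← hgz, ← hgz, h]
  -- Cardinality bounds
  have hcard1 : Fintype.card ι ≤ N := by
    simpa using Fintype.card_le_of_injective g hginj
  have hcard2 : Fintype.card ι ≤ m + 1 := by
    have h1 := hai.card_le_finrank_succ
    have h2 : Module.finrank ℝ (vectorSpan ℝ (Set.range z)) ≤ m := by
      have := Submodule.finrank_le (vectorSpan ℝ (Set.range z))
      simpa [Module.finrank_fin_fun] using this
    omega
  set k := Fintype.card ι with hk_def
  have hkM : k ≤ min N (m + 1) := le_min hcard1 hcard2
  set eqv : Fin k ≃ ι := (Fintype.equivFin ι).symm with heqv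
  -- Define the padded coefficients and indices
  refine ⟨fun j => if h : (j : ℕ) < k then s * c (eqv ⟨j, h⟩) else 0,
    fun j => if h : (j : ℕ) < k then g (eqv ⟨j, h⟩) else ⟨0, hN⟩, ?_, ?_, ?_⟩
  · intro j
    by_cases h : (j : ℕ) < k
    · simp only [dif_pos h]
      exact mul_nonneg hs.le (hcpos _).le
    · simp [dif_neg h]
  · rw [pad_sum_aux hkM (fun j => s * c (eqv j))]
    rw [← Finset.mul_sum, Equiv.sum_comp eqv c, hcsum, mul_one]
  · intro l
    rw [map_sub, sub_eq_zero]
    -- Compute σ l of the recombined sum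
    have key : ∀ j : Fin (min N (m + 1)),
        σ l ((if h : (j : ℕ) < k then s * c (eqv ⟨j, h⟩) else 0) •
          f (if h : (j : ℕ) < k then g (eqv ⟨j, h⟩) else ⟨0, hN⟩)) =
        (if h : (j : ℕ) < k then s * c (eqv ⟨j, h⟩) * z (eqv ⟨j, h⟩) l else 0) := by
      intro j
      by_cases h : (j : ℕ) < k
      · have hz : σ l (f (g (eqv ⟨j, h⟩))) = z (eqv ⟨j, h⟩) l :=
          congrFun (hgz (eqv ⟨j, h⟩)) l
        simp [dif_pos h, map_smul, smul_eq_mul, hz, mul_assoc]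
      · simp [dif_neg h]
    rw [map_sum]
    rw [Finset.sum_congr rfl (fun j _ => key j)]
    rw [pad_sum_aux hkM (fun j => s * c (eqv j) * z (eqv j) l)]
    rw [Equiv.sum_comp eqv (fun j => s * c j * z j l)]
    -- Now relate to σ l φ
    have hcomp : ∑ j : ι, c j * z j l = Finset.univ.centerMass a w l := by
      rw [← hczp]
      simp [Finset.sum_apply]
    have hcm : Finset.univ.centerMass a w l = s⁻¹ * ∑ i, a i * w i l := by
      rw [Finset.centerMass]
      simp [hs_def, Finset.sum_apply, Finset.mul_sum]
    have hsum1 : ∑ j : ι, s * c j * z j l = ∑ i, a i * w i l := by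
      simp_rw [mul_assoc s, ← Finset.mul_sum, hcomp, hcm, ← mul_assoc,
        mul_inv_cancel₀ hs.ne', one_mul]
    rw [hsum1, hφ, map_sum]
    exact Finset.sum_congr rfl (fun i _ => by simp [hw_def])
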